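/- arXiv:2212.09527 — 2 statements merged into one kernel-verified Lean document; each statement's English description precedes it below -/
import Mathlib

section
/- Let μ > 0, let c ≥ 1 and j, i be natural numbers with 1 ≤ j ≤ c-1 ≤ c ≤ i, and let A be a probability measure on [0,∞) with all transforms A*_r(s) = ∫ t^r e^{-st} dA(t) finite. Then the double integral p(i,j) = C(c, c-j)·(cμ)^{i-c+1}/(i-c)! · ∫_0^∞ ∫_0^t v^{i-c} e^{-μ(t-v)j} e^{-cμv} (1-e^{-μ(t-v)})^{c-j} dv dA(t) equals the alternative form C(c-1, c-j-1)·(cμ)^{i-c+2}/(i-c+1)! · ∫_0^∞ ∫_0^t e^{-μ(t-ν)j}(1-e^{-μ(t-ν)})^{c-j-1} ν^{i-c+1} e^{-cμν} dν dA(t). -/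
open Real MeasureTheory Finset intervalIntegral

theorem stmt_13 (μ : ℝ) (hμ : 0 < μ) (c j i : ℕ) (hc : 1 ≤ c) (hj1 : 1 ≤ j)
    (hj2 : j ≤ c - 1) (hi : c ≤ i)
    (A : Measure ℝ) [IsProbabilityMeasure A] (hsupp : A (Set.Iio 0) = 0)
    (hfin : ∀ (r : ℕ) (s : ℝ), 0 < s → Integrable (fun t => t ^ r * Real.exp (-s * t)) A) :
    (c.choose (c - j) : ℝ) * (c * μ) ^ (i - c + 1) / ((i - c).factorial : ℝ) *
        ∫ t, (∫ v in (0:ℝ)..t,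
          v ^ (i - c) * Real.exp (-μ * (t - v) * j) * Real.exp (-c * μ * v) *
            (1 - Real.exp (-μ * (t - v))) ^ (c - j)) ∂A =
      ((c - 1).choose (c - j - 1) : ℝ) * (c * μ) ^ (i - c + 2) / ((i - c + 1).factorial : ℝ) *
        ∫ t, (∫ v in (0:ℝ)..t,
          Real.exp (-μ * (t - v) * j) * (1 - Real.exp (-μ * (t - v))) ^ (c - j - 1) *
            v ^ (i - c + 1) * Real.exp (-c * μ * v)) ∂A := by
  obtain ⟨m, hm⟩ : ∃ m, c - j = m + 1 := ⟨c - j - 1, by omega⟩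
  have hmj : c - j - 1 = m := by omega
  have hcast : (c : ℝ) = (j : ℝ) + (m : ℝ) + 1 := by
    have h : c = j + m + 1 := by omega
    exact_mod_cast congrArg (Nat.cast : ℕ → ℝ) h
  -- binomial identity
  have hNchoose : (m + 1) * c.choose (m + 1) = c * (c - 1).choose m := by
    obtain ⟨p, hp⟩ : ∃ p, c = p + 1 := ⟨c - 1, by omega⟩
    subst hp
    simp only [Nat.add_sub_cancel]
    rw [mul_comm]
    exact (Nat.add_one_mul_choose_eq p m).symm
  have hchooseR : ((m : ℝ) + 1) * (c.choose (c - j) : ℝ) = (c : ℝ) * ((c - 1).choose (c - j - 1) : ℝ) := by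
    rw [hmj, hm]
    exact_mod_cast hNchoose
  have hfactR : (((i - c + 1).factorial : ℕ) : ℝ) = (((i - c : ℕ) : ℝ) + 1) * ((i - c).factorial : ℝ) := by
    rw [Nat.factorial_succ]; push_cast; ring
  rw [← MeasureTheory.integral_const_mul, ← MeasureTheory.integral_const_mul]
  refine integral_congr_ae (Filter.Eventually.of_forall fun t => ?_)
  show (c.choose (c - j) : ℝ) * (c * μ) ^ (i - c + 1) / ((i - c).factorial : ℝ) *
      (∫ v in (0:ℝ)..t,
        v ^ (i - c) * Real.exp (-μ * (t - v) * j) * Real.exp (-c * μ * v) *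
          (1 - Real.exp (-μ * (t - v))) ^ (c - j)) =
    ((c - 1).choose (c - j - 1) : ℝ) * (c * μ) ^ (i - c + 2) / ((i - c + 1).factorial : ℝ) *
      (∫ v in (0:ℝ)..t,
        Real.exp (-μ * (t - v) * j) * (1 - Real.exp (-μ * (t - v))) ^ (c - j - 1) *
          v ^ (i - c + 1) * Real.exp (-c * μ * v))
  -- integration by parts via FTC
  set f : ℝ → ℝ := fun v =>
    v ^ (i - c) * Real.exp (-μ * (t - v) * j) * Real.exp (-c * μ * v) *
      (1 - Real.exp (-μ * (t - v))) ^ (c - j) with hf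
  set g : ℝ → ℝ := fun v =>
    Real.exp (-μ * (t - v) * j) * (1 - Real.exp (-μ * (t - v))) ^ (c - j - 1) *
      v ^ (i - c + 1) * Real.exp (-c * μ * v) with hg
  have hcf : Continuous f := by fun_prop
  have hcg : Continuous g := by fun_prop
  have hderiv : ∀ v ∈ Set.uIcc (0:ℝ) t,
      HasDerivAt (fun v : ℝ => v ^ (i - c + 1) *
          (Real.exp (-μ * (t - v) * j) * Real.exp (-c * μ * v) *
            (1 - Real.exp (-μ * (t - v))) ^ (c - j)))
        ((((i - c : ℕ) : ℝ) + 1) * f v - μ * ((m : ℝ) + 1) * g v) v := by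
    intro v _
    have hlin : HasDerivAt (fun v : ℝ => t - v) (-1) v := (hasDerivAt_id v).const_sub t
    have h1 : HasDerivAt (fun v : ℝ => Real.exp (-μ * (t - v) * (j : ℝ)))
        (Real.exp (-μ * (t - v) * j) * ((-μ) * (-1) * (j : ℝ))) v :=
      (((hlin.const_mul (-μ)).mul_const (j : ℝ)).exp)
    have h2 : HasDerivAt (fun v : ℝ => Real.exp (-(c : ℝ) * μ * v))
        (Real.exp (-(c : ℝ) * μ * v) * (-(c : ℝ) * μ * 1)) v :=
      ((hasDerivAt_id v).const_mul (-(c : ℝ) * μ)).exp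
    have h3 : HasDerivAt (fun v : ℝ => Real.exp (-μ * (t - v)))
        (Real.exp (-μ * (t - v)) * ((-μ) * (-1))) v :=
      ((hlin.const_mul (-μ)).exp)
    have h5 := (h3.const_sub 1).pow (c - j)
    have hp := hasDerivAt_pow (i - c + 1) v
    have hF := hp.mul ((h1.mul h2).mul h5)
    refine hF.congr_deriv ?_
    simp only [hf, hg, hm, hmj, Nat.add_sub_cancel, pow_succ, Nat.cast_add, Nat.cast_one, Pi.mul_apply, Pi.pow_apply]
    rw [hcast]
    ring
  have hDcont : Continuous (fun v : ℝ =>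
      (((i - c : ℕ) : ℝ) + 1) * f v - μ * ((m : ℝ) + 1) * g v) := by fun_prop
  have hint := intervalIntegral.integral_eq_sub_of_hasDerivAt hderiv
    (hDcont.intervalIntegrable 0 t)
  have hFt : (t : ℝ) ^ (i - c + 1) *
      (Real.exp (-μ * (t - t) * j) * Real.exp (-c * μ * t) *
        (1 - Real.exp (-μ * (t - t))) ^ (c - j)) = 0 := by
    simp [hm, sub_self]
  have hF0 : (0 : ℝ) ^ (i - c + 1) *
      (Real.exp (-μ * (t - 0) * j) * Real.exp (-c * μ * 0) *
        (1 - Real.exp (-μ * (t - 0))) ^ (c - j)) = 0 := by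
    simp
  rw [hFt, hF0, sub_zero] at hint
  rw [intervalIntegral.integral_sub (f := fun v => (((i - c : ℕ) : ℝ) + 1) * f v) (g := fun v => μ * ((m : ℝ) + 1) * g v)
      ((continuous_const.mul hcf).intervalIntegrable 0 t)
      ((continuous_const.mul hcg).intervalIntegrable 0 t),
    intervalIntegral.integral_const_mul, intervalIntegral.integral_const_mul] at hint
  have key : (((i - c : ℕ) : ℝ) + 1) * (∫ v in (0:ℝ)..t, f v)
      = μ * ((m : ℝ) + 1) * (∫ v in (0:ℝ)..t, g v) := by linarith
  have hfne : ((i - c).factorial : ℝ) ≠ 0 := Nat.cast_ne_zero.2 (Nat.factorial_ne_zero _)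
  have hnne : (((i - c : ℕ) : ℝ) + 1) ≠ 0 := by positivity
  rw [hfactR, show i - c + 2 = (i - c + 1) + 1 from rfl, pow_succ,
    div_mul_eq_mul_div, div_mul_eq_mul_div, div_eq_div_iff hfne (mul_ne_zero hnne hfne)]
  linear_combination
    (((c : ℝ) * μ) ^ (i - c + 1) * ((i - c).factorial : ℝ) * (c.choose (c - j) : ℝ)) * key
    + (((c : ℝ) * μ) ^ (i - c + 1) * ((i - c).factorial : ℝ) * μ * (∫ v in (0:ℝ)..t, g v)) * hchooseR
end

section
/- Let μ > 0, c ≥ 1, 1 ≤ j ≤ c-1, and c ≤ i. Let A be a probability measure on [0,∞) with A*(s) = ∫ e^{-st} dA(t) and A*_r(s) = ∫ t^r e^{-st} dA(t) all finite. Then C(c-1, c-j-1)·(cμ)^{i-c+2}/(i-c+1)! · ∫_0^∞ ∫_0^t e^{-μ(t-ν)j}(1-e^{-μ(t-ν)})^{c-j-1} ν^{i-c+1} e^{-cμν} dν dA(t) = Σ_{k=1}^{c-j} ((-1)^{c-j-k} (c-1)! / ((k-1)!(c-j-k)! j!)) · (c/k)^{i-c+2} · (A*((c-k)μ) - Σ_{r=0}^{i-c+1}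 (kμ)^r A*_r(cμ)/r!). -/
open Real MeasureTheory Finset intervalIntegral

lemma key_alg (a : ℝ) (ha : a ≠ 0) (m : ℕ) (x : ℝ) :
    a * (∑ r ∈ Finset.range (m+1), (m.factorial / (r.factorial * a ^ (m+1-r))) * x ^ r)
      - ∑ r ∈ Finset.range (m+1), (m.factorial / (r.factorial * a ^ (m+1-r))) * ((r : ℝ) * x ^ (r-1))
    = x ^ m := by
  rw [Finset.mul_sum, Finset.sum_range_succ (fun r => a * _), Finset.sum_range_succ']
  have h0 : ((m.factorial : ℝ) / (Nat.factorial 0 * a ^ (m+1-0))) * ((0:ℕ) * x ^ (0-1)) = 0 := by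
    simp
  rw [h0, add_zero, add_comm, add_sub_assoc]
  have hterm : ∀ r ∈ Finset.range m,
      a * ((m.factorial : ℝ) / (r.factorial * a ^ (m+1-r)) * x ^ r)
        - (m.factorial : ℝ) / ((r+1).factorial * a ^ (m+1-(r+1))) * ((((r:ℕ)+1 : ℕ) : ℝ) * x ^ (r+1-1)) = 0 := by
    intro r hr
    rw [Finset.mem_range] at hr
    have h1 : m + 1 - r = (m - r) + 1 := by omega
    have h2 : m + 1 - (r+1) = m - r := by omega
    have h3 : ((r+1).factorial : ℝ) = (r+1) * r.factorial := by
      rw [Nat.factorial_succ]; push_cast; ring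
    rw [h1, h2, h3]
    have hrf : (r.factorial : ℝ) ≠ 0 := Nat.cast_ne_zero.mpr r.factorial_ne_zero
    have hap : a ^ (m-r) ≠ 0 := pow_ne_zero _ ha
    field_simp
    rw [show r + 1 - 1 = r by omega]; push_cast; ring
  rw [← Finset.sum_sub_distrib, Finset.sum_eq_zero (by intro r hr; exact hterm r hr)]
  simp only [add_zero]
  have : m + 1 - m = 1 := by omega
  rw [this]
  have hmf : (m.factorial : ℝ) ≠ 0 := Nat.cast_ne_zero.mpr m.factorial_ne_zero
  field_simp

lemma antider (a : ℝ) (ha : a ≠ 0) (m : ℕ) (t : ℝ) :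
    ∫ v in (0:ℝ)..t, v ^ m * Real.exp (-(a * v)) =
      m.factorial / a ^ (m+1) -
        Real.exp (-(a*t)) * ∑ r ∈ Finset.range (m+1),
          (m.factorial / (r.factorial * a ^ (m+1-r))) * t ^ r := by
  set F : ℝ → ℝ := fun x => -(Real.exp (-(a*x)) * ∑ r ∈ Finset.range (m+1),
      (m.factorial / (r.factorial * a ^ (m+1-r))) * x ^ r) with hF
  have hder : ∀ x : ℝ, HasDerivAt F (x ^ m * Real.exp (-(a*x))) x := by
    intro x
    have he : HasDerivAt (fun x : ℝ => Real.exp (-(a*x))) (Real.exp (-(a*x)) * (-a)) x := by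
      have := ((hasDerivAt_id x).const_mul a).neg.exp
      simpa using this
    have hS : HasDerivAt (fun x : ℝ => ∑ r ∈ Finset.range (m+1),
        ((m.factorial : ℝ) / (r.factorial * a ^ (m+1-r))) * x ^ r)
        (∑ r ∈ Finset.range (m+1),
          ((m.factorial : ℝ) / (r.factorial * a ^ (m+1-r))) * ((r:ℝ) * x ^ (r-1))) x := by
      apply HasDerivAt.fun_sum
      intro r _
      exact (hasDerivAt_pow r x).const_mul _
    have := (he.mul hS).neg
    refine this.congr_deriv ?_
    have hk := key_alg a ha m x
    rw [← hk]
    ring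
  have hint : ∫ v in (0:ℝ)..t, v ^ m * Real.exp (-(a*v)) = F t - F 0 :=
    intervalIntegral.integral_eq_sub_of_hasDerivAt (fun x _ => hder x)
      (by apply Continuous.intervalIntegrable; continuity)
  have hF0 : F 0 = -((m.factorial : ℝ) / a ^ (m+1)) := by
    simp only [hF]
    rw [Finset.sum_eq_single 0]
    · simp
    · intro r _ hr; simp [zero_pow hr]
    · simp
  rw [hint, hF0]
  simp only [hF]
  ring

lemma pointwise (μ : ℝ) (hμ : 0 < μ) (c j M : ℕ) (hj1 : 1 ≤ j) (hjc : j + 1 ≤ c) (t : ℝ) :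
    (∫ v in (0:ℝ)..t,
      Real.exp (-μ * (t - v) * j) * (1 - Real.exp (-μ * (t - v))) ^ (c - j - 1) *
        v ^ M * Real.exp (-c * μ * v))
    = ∑ k ∈ Finset.Icc 1 (c - j),
        (((c-j-1).choose (c-j-k) : ℝ) * (-1:ℝ)^(c-j-k)) *
          ((M.factorial : ℝ) / ((k:ℝ)*μ)^(M+1) * Real.exp (-((c:ℝ) - (k:ℝ)) * μ * t)
            - ∑ r ∈ Finset.range (M+1),
                (M.factorial : ℝ) / ((r.factorial : ℝ) * ((k:ℝ)*μ)^(M+1-r)) *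
                  (t ^ r * Real.exp (-(c:ℝ) * μ * t))) := by
  obtain ⟨n, rfl⟩ : ∃ n, c = j + n + 1 := ⟨c - j - 1, by omega⟩
  rw [(by omega : j + n + 1 - j = n + 1), (by omega : n + 1 - 1 = n)]
  -- expand the binomial inside the inner integral
  have hexpand : ∀ v : ℝ,
      Real.exp (-μ * (t - v) * j) * (1 - Real.exp (-μ * (t - v))) ^ n *
        v ^ M * Real.exp (-(j+n+1 : ℕ) * μ * v)
      = ∑ l ∈ Finset.range (n+1),
          ((n.choose l : ℝ) * (-1:ℝ)^l * Real.exp (-((j:ℝ)+l) * μ * t)) *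
            (v ^ M * Real.exp (-(((n+1-l : ℕ) : ℝ) * μ * v))) := by
    intro v
    rw [show (1:ℝ) - Real.exp (-μ*(t-v)) = -Real.exp (-μ*(t-v)) + 1 from by ring, add_pow]
    rw [Finset.mul_sum, Finset.sum_mul, Finset.sum_mul]
    refine Finset.sum_congr rfl (fun l hl => ?_)
    rw [Finset.mem_range] at hl
    rw [one_pow, neg_pow, ← Real.exp_nat_mul]
    have hexp : Real.exp (-μ * (t - v) * j) * Real.exp ((l:ℝ) * (-μ * (t - v))) *
        Real.exp (-(j+n+1 : ℕ) * μ * v)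
        = Real.exp (-((j:ℝ)+l) * μ * t) * Real.exp (-(((n+1-l : ℕ) : ℝ) * μ * v)) := by
      rw [← Real.exp_add, ← Real.exp_add, ← Real.exp_add]
      congr 1
      rw [Nat.cast_sub (by omega : l ≤ n + 1)]
      push_cast
      ring
    linear_combination ((-1:ℝ)^l * (n.choose l : ℝ) * v ^ M) * hexp
  rw [intervalIntegral.integral_congr (g := fun v => ∑ l ∈ Finset.range (n+1),
      ((n.choose l : ℝ) * (-1:ℝ)^l * Real.exp (-((j:ℝ)+l) * μ * t)) *
        (v ^ M * Real.exp (-(((n+1-l : ℕ) : ℝ) * μ * v)))) (fun v _ => hexpand v)]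
  rw [intervalIntegral.integral_finset_sum (fun l _ => by
    apply Continuous.intervalIntegrable
    exact continuous_const.mul ((continuous_pow M).mul (by continuity)))]
  have hant : ∀ l ∈ Finset.range (n+1),
      (∫ v in (0:ℝ)..t, ((n.choose l : ℝ) * (-1:ℝ)^l * Real.exp (-((j:ℝ)+l) * μ * t)) *
        (v ^ M * Real.exp (-(((n+1-l : ℕ) : ℝ) * μ * v))))
      = ((n.choose l : ℝ) * (-1:ℝ)^l * Real.exp (-((j:ℝ)+l) * μ * t)) *
        ((M.factorial : ℝ) / (((n+1-l : ℕ) : ℝ)*μ)^(M+1) -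
          Real.exp (-((((n+1-l : ℕ) : ℝ)*μ)*t)) * ∑ r ∈ Finset.range (M+1),
            ((M.factorial : ℝ) / ((r.factorial : ℝ) * (((n+1-l : ℕ) : ℝ)*μ)^(M+1-r))) * t ^ r) := by
    intro l hl
    rw [Finset.mem_range] at hl
    rw [intervalIntegral.integral_const_mul]
    congr 1
    have ha : (((n+1-l : ℕ) : ℝ)*μ) ≠ 0 := by
      have : (0:ℝ) < ((n+1-l : ℕ) : ℝ) := by
        have : 0 < n + 1 - l := by omega
        exact_mod_cast this
      positivity
    have := antider (((n+1-l : ℕ) : ℝ)*μ) ha M t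
    rw [← this]
  rw [Finset.sum_congr rfl hant]
  -- reindex the sum
  rw [← Finset.Ico_add_one_right_eq_Icc, Finset.sum_Ico_eq_sum_range]
  rw [(by omega : n + 1 + 1 - 1 = n + 1)]
  rw [← Finset.sum_range_reflect]
  refine Finset.sum_congr rfl (fun k hk => ?_)
  rw [Finset.mem_range] at hk
  rw [(by omega : n + 1 - 1 - k = n - k), (by omega : n + 1 - (n - k) = k + 1),
      (by omega : n + 1 - (1 + k) = n - k), (by omega : 1 + k = k + 1)]
  -- now a pointwise algebraic identity
  have hA : Real.exp (-((j:ℝ) + ((n-k : ℕ) : ℝ)) * μ * t)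
      = Real.exp (-(((j+n+1 : ℕ) : ℝ) - ((k+1 : ℕ) : ℝ)) * μ * t) := by
    congr 1
    rw [Nat.cast_sub (by omega : k ≤ n)]
    push_cast
    ring
  have hB : Real.exp (-((j:ℝ) + ((n-k : ℕ) : ℝ)) * μ * t) *
      Real.exp (-((((k+1 : ℕ) : ℝ)*μ)*t)) = Real.exp (-(((j+n+1 : ℕ) : ℝ)) * μ * t) := by
    rw [← Real.exp_add]
    congr 1
    rw [Nat.cast_sub (by omega : k ≤ n)]
    push_cast
    ring
  have hS : Real.exp (-(((j+n+1 : ℕ) : ℝ)) * μ * t) *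
      (∑ r ∈ Finset.range (M+1), ((M.factorial : ℝ) / ((r.factorial : ℝ) * (((k+1 : ℕ) : ℝ)*μ)^(M+1-r))) * t ^ r)
      = ∑ r ∈ Finset.range (M+1), (M.factorial : ℝ) / ((r.factorial : ℝ) * (((k+1 : ℕ) : ℝ)*μ)^(M+1-r)) *
          (t ^ r * Real.exp (-(((j+n+1 : ℕ) : ℝ)) * μ * t)) := by
    rw [Finset.mul_sum]
    refine Finset.sum_congr rfl (fun r _ => ?_)
    ring
  linear_combination ((n.choose (n-k) : ℝ) * (-1:ℝ)^(n-k) * ((M.factorial : ℝ) / (((k+1 : ℕ) : ℝ)*μ)^(M+1))) * hA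
    - ((n.choose (n-k) : ℝ) * (-1:ℝ)^(n-k) * (∑ r ∈ Finset.range (M+1), ((M.factorial : ℝ) / ((r.factorial : ℝ) * (((k+1 : ℕ) : ℝ)*μ)^(M+1-r))) * t ^ r)) * hB
    - ((n.choose (n-k) : ℝ) * (-1:ℝ)^(n-k)) * hS

lemma coefB (μ : ℝ) (hμ : 0 < μ) (c j k M : ℕ) (hj1 : 1 ≤ j) (hjc : j + 1 ≤ c)
    (hk1 : 1 ≤ k) (hk2 : k ≤ c - j) :
    ((c - 1).choose (c - j - 1) : ℝ) * ((c:ℝ) * μ) ^ (M+1) / (M.factorial : ℝ) *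
      (((c-j-1).choose (c-j-k) : ℝ) * (-1:ℝ)^(c-j-k)) * ((M.factorial : ℝ) / ((k:ℝ)*μ)^(M+1))
    = (-1 : ℝ) ^ (c - j - k) * ((c - 1).factorial : ℝ) /
        (((k - 1).factorial : ℝ) * ((c - j - k).factorial : ℝ) * (j.factorial : ℝ)) *
      ((c : ℝ) / k) ^ (M+1) := by
  have h1 := Nat.choose_mul_factorial_mul_factorial (show c-j-1 ≤ c-1 by omega)
  rw [(by omega : c-1-(c-j-1) = j)] at h1
  have h2 := Nat.choose_mul_factorial_mul_factorial (show c-j-k ≤ c-j-1 by omega)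
  rw [(by omega : c-j-1-(c-j-k) = k-1)] at h2
  have e1 : ((c-1).choose (c-j-1) : ℝ) * ((c-j-1).factorial:ℝ) * (j.factorial:ℝ)
      = ((c-1).factorial:ℝ) := by exact_mod_cast congrArg (Nat.cast : ℕ → ℝ) h1
  have e2 : ((c-j-1).choose (c-j-k) : ℝ) * ((c-j-k).factorial:ℝ) * ((k-1).factorial:ℝ)
      = ((c-j-1).factorial:ℝ) := by exact_mod_cast congrArg (Nat.cast : ℕ → ℝ) h2
  have fne : ∀ m : ℕ, ((m.factorial : ℝ)) ≠ 0 := fun m => Nat.cast_ne_zero.mpr m.factorial_ne_zero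
  have e1' : ((c-1).choose (c-j-1) : ℝ)
      = ((c-1).factorial:ℝ)/(((c-j-1).factorial:ℝ) * (j.factorial:ℝ)) := by
    rw [eq_div_iff (mul_ne_zero (fne _) (fne _))]; linear_combination e1
  have e2' : ((c-j-1).choose (c-j-k) : ℝ)
      = ((c-j-1).factorial:ℝ)/(((c-j-k).factorial:ℝ) * ((k-1).factorial:ℝ)) := by
    rw [eq_div_iff (mul_ne_zero (fne _) (fne _))]; linear_combination e2
  have hkne : ((k:ℝ)) ≠ 0 := Nat.cast_ne_zero.mpr (by omega)
  have hμne : μ ≠ 0 := ne_of_gt hμ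
  rw [e1', e2', div_pow, mul_pow, mul_pow]
  field_simp

lemma coefC (μ : ℝ) (hμ : 0 < μ) (c j k M r : ℕ) (hj1 : 1 ≤ j) (hjc : j + 1 ≤ c)
    (hk1 : 1 ≤ k) (hk2 : k ≤ c - j) (hrM : r ≤ M) :
    ((c - 1).choose (c - j - 1) : ℝ) * ((c:ℝ) * μ) ^ (M+1) / (M.factorial : ℝ) *
      (((c-j-1).choose (c-j-k) : ℝ) * (-1:ℝ)^(c-j-k)) *
      ((M.factorial : ℝ) / ((r.factorial : ℝ) * ((k:ℝ)*μ)^(M+1-r)))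
    = (-1 : ℝ) ^ (c - j - k) * ((c - 1).factorial : ℝ) /
        (((k - 1).factorial : ℝ) * ((c - j - k).factorial : ℝ) * (j.factorial : ℝ)) *
      ((c : ℝ) / k) ^ (M+1) * (((k:ℝ)*μ)^r / (r.factorial : ℝ)) := by
  obtain ⟨s, rfl⟩ : ∃ s, M = r + s := ⟨M - r, by omega⟩
  rw [(by omega : r + s + 1 - r = s + 1)]
  have h1 := Nat.choose_mul_factorial_mul_factorial (show c-j-1 ≤ c-1 by omega)
  rw [(by omega : c-1-(c-j-1) = j)] at h1
  have h2 := Nat.choose_mul_factorial_mul_factorial (show c-j-k ≤ c-j-1 by omega)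
  rw [(by omega : c-j-1-(c-j-k) = k-1)] at h2
  have e1 : ((c-1).choose (c-j-1) : ℝ) * ((c-j-1).factorial:ℝ) * (j.factorial:ℝ)
      = ((c-1).factorial:ℝ) := by exact_mod_cast congrArg (Nat.cast : ℕ → ℝ) h1
  have e2 : ((c-j-1).choose (c-j-k) : ℝ) * ((c-j-k).factorial:ℝ) * ((k-1).factorial:ℝ)
      = ((c-j-1).factorial:ℝ) := by exact_mod_cast congrArg (Nat.cast : ℕ → ℝ) h2
  have fne : ∀ m : ℕ, ((m.factorial : ℝ)) ≠ 0 := fun m => Nat.cast_ne_zero.mpr m.factorial_ne_zero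
  have e1' : ((c-1).choose (c-j-1) : ℝ)
      = ((c-1).factorial:ℝ)/(((c-j-1).factorial:ℝ) * (j.factorial:ℝ)) := by
    rw [eq_div_iff (mul_ne_zero (fne _) (fne _))]; linear_combination e1
  have e2' : ((c-j-1).choose (c-j-k) : ℝ)
      = ((c-j-1).factorial:ℝ)/(((c-j-k).factorial:ℝ) * ((k-1).factorial:ℝ)) := by
    rw [eq_div_iff (mul_ne_zero (fne _) (fne _))]; linear_combination e2
  have hkne : ((k:ℝ)) ≠ 0 := Nat.cast_ne_zero.mpr (by omega)
  have hμne : μ ≠ 0 := ne_of_gt hμ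
  rw [e1', e2', div_pow, mul_pow, mul_pow, mul_pow]
  field_simp
  ring

theorem stmt_14 (μ : ℝ) (hμ : 0 < μ) (c j i : ℕ) (hc : 1 ≤ c) (hj1 : 1 ≤ j)
    (hj2 : j ≤ c - 1) (hi : c ≤ i)
    (A : Measure ℝ) [IsProbabilityMeasure A] (hsupp : A (Set.Iio 0) = 0)
    (hfin : ∀ (r : ℕ) (s : ℝ), 0 < s → Integrable (fun t => t ^ r * Real.exp (-s * t)) A) :
    ((c - 1).choose (c - j - 1) : ℝ) * (c * μ) ^ (i - c + 2) / ((i - c + 1).factorial : ℝ) *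
        ∫ t, (∫ v in (0:ℝ)..t,
          Real.exp (-μ * (t - v) * j) * (1 - Real.exp (-μ * (t - v))) ^ (c - j - 1) *
            v ^ (i - c + 1) * Real.exp (-c * μ * v)) ∂A =
      ∑ k ∈ Finset.Icc 1 (c - j),
        (-1 : ℝ) ^ (c - j - k) * ((c - 1).factorial : ℝ) /
            (((k - 1).factorial : ℝ) * ((c - j - k).factorial : ℝ) * (j.factorial : ℝ)) *
          ((c : ℝ) / k) ^ (i - c + 2) *
          ((∫ t, Real.exp (-((c : ℝ) - k) * μ * t) ∂A) -
            ∑ r ∈ Finset.range (i - c + 2),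
              ((k : ℝ) * μ) ^ r * (∫ t, t ^ r * Real.exp (-(c : ℝ) * μ * t) ∂A) /
                (r.factorial : ℝ)) := by
  have hjc : j + 1 ≤ c := by omega
  rw [(by omega : i - c + 2 = (i - c + 1) + 1)]
  set M := i - c + 1 with hM
  simp only [pointwise μ hμ c j M hj1 hjc]
  -- integrability facts
  have hcpos : (0:ℝ) < (c:ℝ) * μ := mul_pos (by exact_mod_cast hc) hμ
  have hI2 : ∀ r : ℕ, Integrable (fun t => t ^ r * Real.exp (-(c:ℝ) * μ * t)) A := by
    intro r
    refine (hfin r ((c:ℝ)*μ) hcpos).congr (Filter.Eventually.of_forall fun t => ?_)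
    simp only [neg_mul, mul_assoc]
  have hI1 : ∀ k : ℕ, 1 ≤ k → k ≤ c - j →
      Integrable (fun t => Real.exp (-((c:ℝ) - (k:ℝ)) * μ * t)) A := by
    intro k hk1 hk2
    have hck : (k:ℝ) < (c:ℝ) := by exact_mod_cast (show k < c by omega)
    refine (hfin 0 (((c:ℝ) - (k:ℝ))*μ) (mul_pos (by linarith) hμ)).congr
      (Filter.Eventually.of_forall fun t => ?_)
    simp only [pow_zero, one_mul, neg_mul, mul_assoc]
  have hint : ∀ k ∈ Finset.Icc 1 (c - j), Integrable (fun t =>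
      (((c-j-1).choose (c-j-k) : ℝ) * (-1:ℝ)^(c-j-k)) *
        ((M.factorial : ℝ) / ((k:ℝ)*μ)^(M+1) * Real.exp (-((c:ℝ) - (k:ℝ)) * μ * t)
          - ∑ r ∈ Finset.range (M+1),
              (M.factorial : ℝ) / ((r.factorial : ℝ) * ((k:ℝ)*μ)^(M+1-r)) *
                (t ^ r * Real.exp (-(c:ℝ) * μ * t)))) A := by
    intro k hk
    rw [Finset.mem_Icc] at hk
    exact ((((hI1 k hk.1 hk.2).const_mul _).sub
      (integrable_finset_sum _ (fun r _ => (hI2 r).const_mul _))).const_mul _)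
  rw [MeasureTheory.integral_finset_sum _ hint, Finset.mul_sum]
  refine Finset.sum_congr rfl fun k hk => ?_
  rw [Finset.mem_Icc] at hk
  rw [MeasureTheory.integral_const_mul,
    MeasureTheory.integral_sub ((hI1 k hk.1 hk.2).const_mul _)
      (integrable_finset_sum _ (fun r _ => (hI2 r).const_mul _)),
    MeasureTheory.integral_const_mul,
    MeasureTheory.integral_finset_sum _ (fun r _ => (hI2 r).const_mul _)]
  simp only [MeasureTheory.integral_const_mul]
  have hPB := coefB μ hμ c j k M hj1 hjc hk.1 hk.2
  have hS : (((c - 1).choose (c - j - 1) : ℝ) * ((c:ℝ) * μ) ^ (M+1) / (M.factorial : ℝ) *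
        (((c-j-1).choose (c-j-k) : ℝ) * (-1:ℝ)^(c-j-k))) *
      (∑ r ∈ Finset.range (M+1),
        (M.factorial : ℝ) / ((r.factorial : ℝ) * ((k:ℝ)*μ)^(M+1-r)) *
          ∫ t, t ^ r * Real.exp (-(c:ℝ) * μ * t) ∂A)
      = ((-1 : ℝ) ^ (c - j - k) * ((c - 1).factorial : ℝ) /
          (((k - 1).factorial : ℝ) * ((c - j - k).factorial : ℝ) * (j.factorial : ℝ)) *
        ((c : ℝ) / k) ^ (M+1)) *
      (∑ r ∈ Finset.range (M+1),
        ((k : ℝ) * μ) ^ r * (∫ t, t ^ r * Real.exp (-(c : ℝ) * μ * t) ∂A) /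
          (r.factorial : ℝ)) := by
    rw [Finset.mul_sum, Finset.mul_sum]
    refine Finset.sum_congr rfl fun r hr => ?_
    rw [Finset.mem_range] at hr
    have := coefC μ hμ c j k M r hj1 hjc hk.1 hk.2 (by omega)
    linear_combination (∫ t, t ^ r * Real.exp (-(c:ℝ) * μ * t) ∂A) * this
  linear_combination (∫ t, Real.exp (-((c:ℝ) - (k:ℝ)) * μ * t) ∂A) * hPB - hS
end
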